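/- For every integer t ≥ 3, the set of symplectic t-cores is infinite, and the set of orthogonal t-cores is infinite. That is, there are infinitely many partitions λ that are t-cores and satisfy λ'_i − i = λ_i − i + 1 for all 1 ≤ i ≤ rank(λ), and infinitely many partitions λ that are t-cores and satisfy λ'_i − i = λ_i − i − 1 for all 1 ≤ i ≤ rank(λ). -/

import Mathlib

open BigOperators

/-- A partition: a weakly decreasing finite list of positive integers. -/
structure Partn where
  parts : List ℕ
  sorted : parts.Pairwise (· ≥ ·)
  pos : ∀ a ∈ parts, 0 < a

namespace Partn

/-- The beta set of a partition, taken with `m = ℓ(λ)` rows: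
`β_j = λ_j + ℓ(λ) - j` (0-indexed). -/
def beta (p : Partn) (j : ℕ) : ℕ :=
  p.parts.getD j 0 + (p.parts.length - 1 - j)

/-- `p` is a `t`-core: whenever a beta number is `≥ t`, the beta number `β - t` also
occurs (equivalently, no hook length equals `t`). -/
def IsTCore (t : ℕ) (p : Partn) : Prop :=
  ∀ j < p.parts.length, t ≤ p.beta j →
    ∃ k < p.parts.length, p.beta k = p.beta j - t

/-- The (Frobenius) rank: `max {k : λ_k ≥ k}` (`0` for the empty partition). -/
def rank (p : Partn) : ℕ :=
  ((Finset.range (p.parts.length + 1)).filter fun i => i + 1 ≤ p.parts.getD i 0).sup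
    fun i => i + 1

/-- `p` is `z`-asymmetric: `λ'_i - i = λ_i - i + z` for all `1 ≤ i ≤ rank(λ)`, where
`λ'_i = #{j : λ_j ≥ i}` is the conjugate partition.  Symplectic partitions are the
`1`-asymmetric ones, orthogonal partitions the `(-1)`-asymmetric ones. -/
def ZAsym (z : ℤ) (p : Partn) : Prop :=
  ∀ i : ℕ, i + 1 ≤ p.rank →
    ((p.parts.countP fun a => decide (i + 1 ≤ a) : ℕ) : ℤ) = (p.parts.getD i 0 : ℤ) + z

end Partn

namespace TCoreAux

/-- The recursive family of partitions (as lists). -/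
def fam (t c : ℕ) (L : List ℕ) : ℕ → List ℕ
  | 0 => L
  | n+1 => ((n+1) * t + c) :: ((fam t c L n).map (· + 1) ++ List.replicate (t-1) 1)

variable {t c : ℕ} {L : List ℕ}

lemma fam_length (ht : 1 ≤ t) (n : ℕ) : (fam t c L n).length = n * t + L.length := by
  induction n with
  | zero => simp [fam]
  | succ n ih =>
    simp only [fam, List.length_cons, List.length_append, List.length_map,
      List.length_replicate, ih]
    have hm : (n + 1) * t = n * t + t := by ring
    omega

lemma fam_getD_zero (hL : L.getD 0 0 = c) (n : ℕ) :
    (fam t c L n).getD 0 0 = n * t + c := by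
  cases n with
  | zero => simpa [fam] using hL
  | succ n => simp [fam]

lemma fam_getD_succ (ht : 1 ≤ t) {n i : ℕ} (hi : i < (fam t c L n).length) :
    (fam t c L (n+1)).getD (i+1) 0 = (fam t c L n).getD i 0 + 1 := by
  have hi' : i < ((fam t c L n).map (· + 1)).length := by simpa using hi
  rw [fam, List.getD_cons_succ, List.getD_append _ _ _ _ hi',
    List.getD_eq_getElem _ _ hi', List.getElem_map,
    List.getD_eq_getElem _ _ (by simpa using hi)]

lemma fam_getD_trailing (ht : 1 ≤ t) {n j : ℕ}
    (h1 : (fam t c L n).length + 1 ≤ j) (h2 : j < (fam t c L (n+1)).length) :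
    (fam t c L (n+1)).getD j 0 = 1 := by
  obtain ⟨i, rfl⟩ : ∃ i, j = i + 1 := ⟨j - 1, by omega⟩
  have hlen : ((fam t c L n).map (· + 1)).length = (fam t c L n).length := by simp
  rw [fam, List.getD_cons_succ, List.getD_append_right _ _ _ _ (by omega)]
  have h2' : i + 1 < (fam t c L (n+1)).length := h2
  rw [fam_length ht] at h2'
  have h2n := fam_length (t := t) (c := c) (L := L) ht n
  have hm : (n + 1) * t = n * t + t := by ring
  have hlt : i - ((fam t c L n).map (· + 1)).length < t - 1 := by
    rw [hlen]; omega
  rw [List.getD_eq_getElem _ _ (by simpa using hlt), List.getElem_replicate]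

lemma fam_pos (ht : 1 ≤ t) (hL : ∀ a ∈ L, 1 ≤ a) (n : ℕ) : ∀ a ∈ fam t c L n, 1 ≤ a := by
  induction n with
  | zero => exact hL
  | succ n ih =>
    intro a ha
    rcases List.mem_cons.1 ha with rfl | ha'
    · have : n + 1 ≤ (n+1) * t := Nat.le_mul_of_pos_right _ (by omega)
      omega
    rcases List.mem_append.1 ha' with h | h
    · obtain ⟨b, hb, rfl⟩ := List.mem_map.1 h
      omega
    · rw [List.eq_of_mem_replicate h]

lemma fam_le (ht : 1 ≤ t) (hc : 1 ≤ c) (hL : ∀ a ∈ L, a ≤ c) (n : ℕ) :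
    ∀ a ∈ fam t c L n, a ≤ n * t + c := by
  induction n with
  | zero => simpa [fam] using hL
  | succ n ih =>
    intro a ha
    have hm : (n + 1) * t = n * t + t := by ring
    rcases List.mem_cons.1 ha with rfl | ha'
    · omega
    rcases List.mem_append.1 ha' with h | h
    · obtain ⟨b, hb, rfl⟩ := List.mem_map.1 h
      have := ih b hb; omega
    · rw [List.eq_of_mem_replicate h]; omega

lemma fam_sorted (ht : 1 ≤ t) (hc : 1 ≤ c) (hLc : ∀ a ∈ L, a ≤ c)
    (hs : L.Pairwise (· ≥ ·)) (n : ℕ) : (fam t c L n).Pairwise (· ≥ ·) := by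
  induction n with
  | zero => exact hs
  | succ n ih =>
    rw [fam, List.pairwise_cons]
    have hm : (n + 1) * t = n * t + t := by ring
    constructor
    · intro b hb
      rcases List.mem_append.1 hb with h | h
      · obtain ⟨a, ha, rfl⟩ := List.mem_map.1 h
        have := fam_le ht hc hLc n a ha
        omega
      · rw [List.eq_of_mem_replicate h]
        omega
    · rw [List.pairwise_append]
      refine ⟨List.Pairwise.map _ (fun a b h => by omega) ih,
        List.pairwise_replicate.2 (Or.inr (le_refl 1)), ?_⟩
      intro a ha b hb
      rw [List.eq_of_mem_replicate hb]
      obtain ⟨x, hx, rfl⟩ := List.mem_map.1 ha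
      omega

/-- beta function on raw lists. -/
def bet (l : List ℕ) (j : ℕ) : ℕ := l.getD j 0 + (l.length - 1 - j)

lemma bet_pos (ht : 1 ≤ t) (hL : ∀ a ∈ L, 1 ≤ a) {n j : ℕ} (hj : j < (fam t c L n).length) :
    1 ≤ bet (fam t c L n) j := by
  have : 1 ≤ (fam t c L n).getD j 0 := by
    rw [List.getD_eq_getElem _ _ hj]
    exact fam_pos ht hL n _ (List.getElem_mem hj)
  unfold bet; omega

lemma bet_succ (ht : 1 ≤ t) {n i : ℕ} (hi : i < (fam t c L n).length) :
    bet (fam t c L (n+1)) (i+1) = bet (fam t c L n) i + t := by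
  unfold bet
  rw [fam_getD_succ ht hi, fam_length ht (n+1), fam_length ht n]
  rw [fam_length ht n] at hi
  have hm : (n + 1) * t = n * t + t := by ring
  omega

lemma bet_trailing_mem (ht : 1 ≤ t) (hL : L ≠ []) {n v : ℕ} (hv1 : 1 ≤ v) (hv2 : v ≤ t - 1) :
    ∃ k < (fam t c L (n+1)).length, bet (fam t c L (n+1)) k = v := by
  have hlen := fam_length (t := t) (c := c) (L := L) ht (n+1)
  have hlenn := fam_length (t := t) (c := c) (L := L) ht n
  have hm : (n + 1) * t = n * t + t := by ring
  have hL1 : 1 ≤ L.length := List.length_pos_iff.2 hL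
  refine ⟨(fam t c L (n+1)).length - v, by omega, ?_⟩
  have h1 : (fam t c L n).length + 1 ≤ (fam t c L (n+1)).length - v := by omega
  have h2 : (fam t c L (n+1)).length - v < (fam t c L (n+1)).length := by omega
  unfold bet
  rw [fam_getD_trailing ht h1 h2]
  omega

/-- the t-core property for raw lists. -/
def TC (t : ℕ) (l : List ℕ) : Prop :=
  ∀ j < l.length, t ≤ bet l j → ∃ k < l.length, bet l k = bet l j - t

lemma fam_tc (ht : 3 ≤ t) (hc : 1 ≤ c) (hL : L ≠ []) (hL0 : L.getD 0 0 = c)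
    (hLpos : ∀ a ∈ L, 1 ≤ a) (hbase : ∀ j < L.length, bet L j < t) (n : ℕ) :
    TC t (fam t c L n) := by
  have ht1 : 1 ≤ t := by omega
  induction n with
  | zero =>
    intro j hj hbj
    have hj' : j < L.length := by simpa [fam] using hj
    have := hbase j hj'
    simp only [fam] at hbj
    omega
  | succ n ih =>
    intro j hj hbj
    have hlen := fam_length (t := t) (c := c) (L := L) ht1 (n+1)
    have hlenn := fam_length (t := t) (c := c) (L := L) ht1 n
    have hm : (n + 1) * t = n * t + t := by ring
    have hL1 : 1 ≤ L.length := List.length_pos_iff.2 hL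
    rcases Nat.lt_or_ge j ((fam t c L n).length + 1) with hcase | hcase
    · rcases Nat.eq_zero_or_pos j with rfl | hj0
      · -- j = 0
        refine ⟨1, by omega, ?_⟩
        have h0 : 0 < (fam t c L n).length := by omega
        have hb1 : bet (fam t c L (n+1)) 1 = bet (fam t c L n) 0 + t := bet_succ ht1 h0
        have hb0 : bet (fam t c L (n+1)) 0 = (n+1) * t + c + ((fam t c L (n+1)).length - 1) := by
          unfold bet
          rw [fam_getD_zero hL0]
          omega
        have hbn0 : bet (fam t c L n) 0 = n * t + c + ((fam t c L n).length - 1) := by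
          unfold bet
          rw [fam_getD_zero hL0]
          omega
        omega
      · -- 1 ≤ j ≤ len(fam n)
        obtain ⟨i, rfl⟩ : ∃ i, j = i + 1 := ⟨j - 1, by omega⟩
        have hi : i < (fam t c L n).length := by omega
        have hbs : bet (fam t c L (n+1)) (i+1) = bet (fam t c L n) i + t := bet_succ ht1 hi
        rcases Nat.lt_or_ge (bet (fam t c L n) i) t with hlt | hge
        · obtain ⟨k, hk, hbk⟩ := bet_trailing_mem (c := c) ht1 hL
            (bet_pos ht1 hLpos hi) (by omega) (n := n)
          exact ⟨k, hk, by omega⟩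
        · obtain ⟨k, hk, hbk⟩ := ih i hi hge
          refine ⟨k + 1, by omega, ?_⟩
          rw [bet_succ ht1 hk]
          omega
    · -- trailing region: bet < t, contradiction
      exfalso
      have hg : (fam t c L (n+1)).getD j 0 = 1 := fam_getD_trailing ht1 hcase hj
      unfold bet at hbj
      rw [hg] at hbj
      omega

/-- the count lemma for z-asymmetry. -/
lemma fam_count (ht : 3 ≤ t) (hc : 1 ≤ c) (hL : L ≠ []) (hL0 : L.getD 0 0 = c)
    (hLpos : ∀ a ∈ L, 1 ≤ a) (z : ℤ) (hz : (L.length : ℤ) = (c : ℤ) + z) (n : ℕ) :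
    ∀ i ≤ n, ((List.countP (fun a => decide (i + 1 ≤ a)) (fam t c L n) : ℕ) : ℤ)
      = ((fam t c L n).getD i 0 : ℤ) + z := by
  have ht1 : 1 ≤ t := by omega
  have hL1 : 1 ≤ L.length := List.length_pos_iff.2 hL
  induction n with
  | zero =>
    intro i hi
    interval_cases i
    show ((List.countP (fun a => decide (0 + 1 ≤ a)) L : ℕ) : ℤ) = ((L.getD 0 0 : ℕ) : ℤ) + z
    have hcnt : List.countP (fun a => decide (0 + 1 ≤ a)) L = L.length := by
      rw [List.countP_eq_length]
      intro a ha
      simpa using hLpos a ha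
    rw [hcnt, hL0]
    exact_mod_cast hz
  | succ n ih =>
    intro i hi
    have hlen := fam_length (t := t) (c := c) (L := L) ht1 (n+1)
    have hlenn := fam_length (t := t) (c := c) (L := L) ht1 n
    have hm : (n + 1) * t = n * t + t := by ring
    rcases Nat.eq_zero_or_pos i with rfl | hi0
    · have hall : List.countP (fun a => decide (0 + 1 ≤ a)) (fam t c L (n+1))
          = (fam t c L (n+1)).length := by
        rw [List.countP_eq_length]
        intro a ha
        simpa using fam_pos ht1 hLpos (n+1) a ha
      rw [hall, fam_getD_zero hL0, hlen]
      omega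
    · obtain ⟨i, rfl⟩ : ∃ i', i = i' + 1 := ⟨i - 1, by omega⟩
      have hin : i ≤ n := by omega
      have hhead : (decide (i + 1 + 1 ≤ (n+1) * t + c)) = true := by
        simp only [decide_eq_true_eq]
        have : n + 1 ≤ (n+1) * t := Nat.le_mul_of_pos_right _ (by omega)
        omega
      have hrep : List.countP (fun a => decide (i + 1 + 1 ≤ a)) (List.replicate (t-1) 1) = 0 := by
        rw [List.countP_eq_zero]
        intro a ha
        rw [List.eq_of_mem_replicate ha]
        simp
      have hmap : List.countP (fun a => decide (i + 1 + 1 ≤ a)) ((fam t c L n).map (· + 1))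
          = List.countP (fun a => decide (i + 1 ≤ a)) (fam t c L n) := by
        rw [List.countP_map]
        apply List.countP_congr
        intro a _
        simp only [Function.comp_apply, decide_eq_true_eq]
        omega
      have hrec : List.countP (fun a => decide (i + 1 + 1 ≤ a)) (fam t c L (n+1))
          = List.countP (fun a => decide (i + 1 ≤ a)) (fam t c L n) + 1 := by
        rw [fam]
        rw [List.countP_cons, List.countP_append, hmap, hrep, hhead]
        simp
      have hnn : n ≤ n * t := Nat.le_mul_of_pos_right _ (by omega)
      rw [hrec, fam_getD_succ ht1 (by omega)]
      have hih := ih i hin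
      omega

lemma fam_getD_rank_bound (ht : 3 ≤ t) (hL1 : L.getD 1 0 ≤ 1) (hL : L ≠ []) (n : ℕ) :
    (fam t c L n).getD (n+1) 0 ≤ n + 1 := by
  have ht1 : 1 ≤ t := by omega
  have hLl : 1 ≤ L.length := List.length_pos_iff.2 hL
  induction n with
  | zero => simpa [fam] using hL1
  | succ n ih =>
    have hlenn := fam_length (t := t) (c := c) (L := L) ht1 n
    have hlen := fam_length (t := t) (c := c) (L := L) ht1 (n+1)
    have hm : (n + 1) * t = n * t + t := by ring
    rcases Nat.lt_or_ge (n+1) ((fam t c L n).length) with hlt | hge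
    · rw [fam_getD_succ ht1 hlt]
      omega
    · rcases Nat.lt_or_ge (n+2) ((fam t c L (n+1)).length) with h2 | h2
      · rw [fam_getD_trailing ht1 (by omega) h2]
        omega
      · rw [List.getD_eq_default _ _ (by omega)]
        omega

end TCoreAux

namespace TCoreAux

lemma getD_anti {l : List ℕ} (h : l.Pairwise (· ≥ ·)) {i j : ℕ} (hij : i ≤ j) :
    l.getD j 0 ≤ l.getD i 0 := by
  rcases Nat.lt_or_ge j l.length with hj | hj
  · have hi : i < l.length := lt_of_le_of_lt hij hj
    rw [List.getD_eq_getElem _ _ hj, List.getD_eq_getElem _ _ hi]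
    exact h.rel_get_of_le (a := ⟨i, hi⟩) (b := ⟨j, hj⟩) hij
  · rw [List.getD_eq_default _ _ hj]
    exact Nat.zero_le _

/-- The main construction: for suitable base data, an infinite family of
`z`-asymmetric `t`-cores. -/
lemma main (t : ℕ) (ht : 3 ≤ t) (c : ℕ) (z : ℤ) (L : List ℕ)
    (hc : 1 ≤ c) (hL : L ≠ []) (hL0 : L.getD 0 0 = c) (hL1 : L.getD 1 0 ≤ 1)
    (hLpos : ∀ a ∈ L, 1 ≤ a) (hLc : ∀ a ∈ L, a ≤ c) (hs : L.Pairwise (· ≥ ·))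
    (hbase : ∀ j < L.length, bet L j < t) (hz : (L.length : ℤ) = (c : ℤ) + z) :
    {p : Partn | p.IsTCore t ∧ p.ZAsym z}.Infinite := by
  have ht1 : 1 ≤ t := by omega
  set f : ℕ → Partn := fun n =>
    ⟨fam t c L n, fam_sorted ht1 hc hLc hs n, fam_pos ht1 hLpos n⟩ with hf
  refine Set.infinite_of_injective_forall_mem (f := f) ?_ ?_
  · intro a b hab
    have hparts : fam t c L a = fam t c L b := congrArg Partn.parts hab
    have hlen : (fam t c L a).length = (fam t c L b).length := by rw [hparts]
    rw [fam_length ht1, fam_length ht1] at hlen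
    have : a * t = b * t := by omega
    exact Nat.eq_of_mul_eq_mul_right (by omega) this
  · intro n
    have hrank : (f n).rank ≤ n + 1 := by
      apply Finset.sup_le
      intro i hi
      rw [Finset.mem_filter] at hi
      obtain ⟨-, hgd⟩ := hi
      by_contra hcon
      have hni : n + 1 ≤ i := by omega
      have h1 : (fam t c L n).getD i 0 ≤ (fam t c L n).getD (n+1) 0 :=
        getD_anti (fam_sorted ht1 hc hLc hs n) hni
      have h2 := fam_getD_rank_bound (c := c) ht hL1 hL n
      have : (f n).parts.getD i 0 = (fam t c L n).getD i 0 := rfl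
      omega
    refine ⟨?_, ?_⟩
    · exact fam_tc ht hc hL hL0 hLpos hbase n
    · intro i hi
      exact fam_count ht hc hL hL0 hLpos z hz n i (by omega)

end TCoreAux

/-- For every `t ≥ 3` there are infinitely many symplectic `t`-cores and infinitely
many orthogonal `t`-cores. -/
theorem infinitely_many_symplectic_and_orthogonal_tcores
    (t : ℕ) (ht : 3 ≤ t) :
    {p : Partn | p.IsTCore t ∧ p.ZAsym 1}.Infinite ∧
    {p : Partn | p.IsTCore t ∧ p.ZAsym (-1)}.Infinite := by
  constructor
  · apply TCoreAux.main t ht 1 1 [1, 1]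
    · omega
    · simp
    · rfl
    · simp
    · intro a ha
      simp at ha
      omega
    · intro a ha
      simp at ha
      omega
    · simp [List.pairwise_cons]
    · intro j hj
      simp only [List.length_cons, List.length_nil] at hj
      interval_cases j <;> simp [TCoreAux.bet] <;> omega
    · norm_num
  · apply TCoreAux.main t ht 2 (-1) [2]
    · omega
    · simp
    · rfl
    · simp
    · intro a ha
      simp at ha
      omega
    · intro a ha
      simp at ha
      omega
    · simp
    · intro j hj
      simp only [List.length_cons, List.length_nil] at hj
      interval_cases j <;> simp [TCoreAux.bet] <;> omega
    · norm_num
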